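/- Let A = ∑_{ν=1}^{R} ξ_ν a_ν^{(1)} ⊗ a_ν^{(2)} ⊗ a_ν^{(3)} with unit-norm vectors a_ν^{(ℓ)} ∈ ℝⁿ, and let A^{(ℓ)} ∈ ℝ^{n×R} be the side matrix with columns a_ν^{(ℓ)}. Let Z₀^{(ℓ)} ∈ ℝ^{n×rₗ} be the orthonormal matrix of the rₗ dominant left singular vectors of A^{(ℓ)}, and let A⁰_(r) be the orthogonal projection of A onto the subspaces spanned by Z₀^{(1)}, Z₀^{(2)}, Z₀^{(3)} (the reduced HOSVD approximation). Then ‖A − A⁰_(r)‖ ≤ (∑_{ν=1}^R ξ_ν²)^{1/2} · ∑_{ℓ=1}^{3} (∑_{k=rₗ+1}^{min(n,R)} σ_{ℓ,k}²)^{1/2}, where σ_{ℓ,k} are the singular values of A^{(ℓ)} in decreasing order and ‖·‖ is the Frobenius norm. -/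

import Mathlib

open Finset Real

lemma pair_cs {R : ℕ} {ι κ : Type*} [Fintype ι] [Fintype κ]
    (u : Fin R → ι → ℝ) (q : Fin R → κ → ℝ) :
    ∑ x : ι, ∑ y : κ, (∑ ν, u ν x * q ν y)^2 ≤
      (∑ ν, ∑ x : ι, u ν x ^ 2) * (∑ ν, ∑ y : κ, q ν y ^ 2) := by
  calc ∑ x : ι, ∑ y : κ, (∑ ν, u ν x * q ν y)^2
      ≤ ∑ x : ι, ∑ y : κ, (∑ ν, u ν x ^2) * (∑ ν, q ν y ^2) :=
        Finset.sum_le_sum fun x _ => Finset.sum_le_sum fun y _ =>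
          Finset.sum_mul_sq_le_sq_mul_sq Finset.univ _ _
    _ = (∑ x : ι, ∑ ν, u ν x ^ 2) * (∑ y : κ, ∑ ν, q ν y ^ 2) := by
        rw [Finset.sum_mul_sum]
    _ = (∑ ν, ∑ x : ι, u ν x ^ 2) * (∑ ν, ∑ y : κ, q ν y ^ 2) := by
        rw [Finset.sum_comm (f := fun x ν => u ν x ^2),
            Finset.sum_comm (f := fun y ν => q ν y ^2)]

/-- norm of combination of orthonormal vectors -/
lemma ortho_sq {n : ℕ} (m : ℕ) (z : ℕ → Fin n → ℝ)
    (hz : ∀ k < m, ∀ k' < m, ∑ i, z k i * z k' i = if k = k' then 1 else 0)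
    (s : Finset ℕ) (hs : ∀ k ∈ s, k < m) (d : ℕ → ℝ) :
    ∑ i, (∑ t ∈ s, d t * z t i)^2 = ∑ t ∈ s, d t ^ 2 := by
  have horth : ∀ t ∈ s, ∀ t' ∈ s, ∑ i, z t i * z t' i = if t = t' then 1 else 0 :=
    fun t ht t' ht' => hz t (hs t ht) t' (hs t' ht')
  calc ∑ i, (∑ t ∈ s, d t * z t i)^2
      = ∑ i, ∑ t ∈ s, ∑ t' ∈ s, d t * z t i * (d t' * z t' i) := by
        simp_rw [sq, Finset.sum_mul_sum]
    _ = ∑ t ∈ s, ∑ t' ∈ s, ∑ i, d t * z t i * (d t' * z t' i) := by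
        rw [Finset.sum_comm]
        exact Finset.sum_congr rfl fun t _ => Finset.sum_comm
    _ = ∑ t ∈ s, ∑ t' ∈ s, d t * d t' * (if t = t' then 1 else 0) := by
        refine Finset.sum_congr rfl fun t ht => Finset.sum_congr rfl fun t' ht' => ?_
        rw [← horth t ht t' ht', Finset.mul_sum]
        exact Finset.sum_congr rfl fun i _ => by ring
    _ = ∑ t ∈ s, d t ^ 2 := by
        refine Finset.sum_congr rfl fun t ht => ?_
        rw [Finset.sum_mul_boole]
        simp [ht, sq]

lemma contraction {n : ℕ} (m rr : ℕ) (hrm : rr ≤ m) (z : ℕ → Fin n → ℝ)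
    (hz : ∀ k < m, ∀ k' < m, ∑ i, z k i * z k' i = if k = k' then 1 else 0)
    (x : Fin n → ℝ) :
    ∑ i, (∑ i', (∑ t ∈ Finset.range rr, z t i * z t i') * x i')^2 ≤ ∑ i, x i ^2 := by
  set c : ℕ → ℝ := fun t => ∑ i, z t i * x i with hc
  have hsr : ∀ k ∈ Finset.range rr, k < m :=
    fun k hk => lt_of_lt_of_le (Finset.mem_range.mp hk) hrm
  have hy : ∀ i, (∑ i', (∑ t ∈ Finset.range rr, z t i * z t i') * x i')
      = ∑ t ∈ Finset.range rr, c t * z t i := by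
    intro i
    calc ∑ i', (∑ t ∈ Finset.range rr, z t i * z t i') * x i'
        = ∑ i', ∑ t ∈ Finset.range rr, z t i * z t i' * x i' := by simp_rw [Finset.sum_mul]
      _ = ∑ t ∈ Finset.range rr, ∑ i', z t i * z t i' * x i' := Finset.sum_comm
      _ = ∑ t ∈ Finset.range rr, c t * z t i := by
          refine Finset.sum_congr rfl fun t _ => ?_
          simp only [hc]
          rw [Finset.sum_mul]
          exact Finset.sum_congr rfl fun i' _ => by ring
  have hsq : ∑ i, (∑ t ∈ Finset.range rr, c t * z t i)^2 = ∑ t ∈ Finset.range rr, c t ^ 2 :=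
    ortho_sq m z hz _ hsr c
  have hxy : ∑ i, x i * (∑ t ∈ Finset.range rr, c t * z t i)
      = ∑ t ∈ Finset.range rr, c t ^ 2 := by
    calc ∑ i, x i * (∑ t ∈ Finset.range rr, c t * z t i)
        = ∑ i, ∑ t ∈ Finset.range rr, x i * (c t * z t i) := by simp_rw [Finset.mul_sum]
      _ = ∑ t ∈ Finset.range rr, ∑ i, x i * (c t * z t i) := Finset.sum_comm
      _ = ∑ t ∈ Finset.range rr, c t ^ 2 := by
          refine Finset.sum_congr rfl fun t _ => ?_
          have : ∑ i, x i * (c t * z t i) = c t * ∑ i, z t i * x i := by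
            rw [Finset.mul_sum]; exact Finset.sum_congr rfl fun i _ => by ring
          rw [this, sq]
  have hnn : (0:ℝ) ≤ ∑ i, (x i - ∑ t ∈ Finset.range rr, c t * z t i)^2 :=
    Finset.sum_nonneg fun i _ => sq_nonneg _
  have hexp : ∑ i, (x i - ∑ t ∈ Finset.range rr, c t * z t i)^2
      = ∑ i, x i ^2 - ∑ t ∈ Finset.range rr, c t ^2 := by
    have h1 : ∀ i, (x i - ∑ t ∈ Finset.range rr, c t * z t i)^2
        = x i ^2 - 2 * (x i * ∑ t ∈ Finset.range rr, c t * z t i)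
          + (∑ t ∈ Finset.range rr, c t * z t i)^2 := fun i => by ring
    simp_rw [h1]
    rw [Finset.sum_add_distrib, Finset.sum_sub_distrib, ← Finset.mul_sum, hxy, hsq]
    ring
  simp_rw [hy, hsq]
  have := hexp ▸ hnn
  linarith

lemma myResidual {n R : ℕ} (m rr : ℕ) (hrm : rr ≤ m)
    (σ : ℕ → ℝ) (z : ℕ → Fin n → ℝ) (v : ℕ → Fin R → ℝ)
    (hz : ∀ k < m, ∀ k' < m, ∑ i, z k i * z k' i = if k = k' then 1 else 0)
    (a : Fin R → Fin n → ℝ)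
    (hsvd : ∀ ν i, a ν i = ∑ k ∈ Finset.range m, σ k * z k i * v k ν)
    (ν : Fin R) (i : Fin n) :
    a ν i - ∑ i', (∑ t ∈ Finset.range rr, z t i * z t i') * a ν i'
      = ∑ k ∈ Finset.Ico rr m, σ k * v k ν * z k i := by
  have key : ∑ i', (∑ t ∈ Finset.range rr, z t i * z t i') * a ν i'
      = ∑ t ∈ Finset.range rr, σ t * v t ν * z t i := by
    calc ∑ i', (∑ t ∈ Finset.range rr, z t i * z t i') * a ν i'
        = ∑ i', ∑ t ∈ Finset.range rr, z t i * z t i' * a ν i' := by simp_rw [Finset.sum_mul]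
      _ = ∑ t ∈ Finset.range rr, ∑ i', z t i * z t i' * a ν i' := Finset.sum_comm
      _ = ∑ t ∈ Finset.range rr, σ t * v t ν * z t i := by
          refine Finset.sum_congr rfl fun t ht => ?_
          have htm : t < m := lt_of_lt_of_le (Finset.mem_range.mp ht) hrm
          calc ∑ i', z t i * z t i' * a ν i'
              = ∑ i', ∑ k ∈ Finset.range m, z t i * (σ k * v k ν) * (z t i' * z k i') := by
                refine Finset.sum_congr rfl fun i' _ => ?_
                rw [hsvd, Finset.mul_sum]
                exact Finset.sum_congr rfl fun k _ => by ring
            _ = ∑ k ∈ Finset.range m, ∑ i', z t i * (σ k * v k ν) * (z t i' * z k i') :=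
                Finset.sum_comm
            _ = ∑ k ∈ Finset.range m, z t i * (σ k * v k ν) * (if t = k then 1 else 0) := by
                refine Finset.sum_congr rfl fun k hk => ?_
                rw [← Finset.mul_sum, hz t htm k (Finset.mem_range.mp hk)]
            _ = σ t * v t ν * z t i := by
                rw [Finset.sum_mul_boole]
                simp [Finset.mem_range.mpr htm]
                ring
  rw [key, hsvd]
  rw [show Finset.range m = Finset.range rr ∪ Finset.Ico rr m by
    rw [Finset.range_eq_Ico, Finset.range_eq_Ico]; exact (Finset.Ico_union_Ico_eq_Ico (Nat.zero_le _) hrm).symm]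
  rw [Finset.sum_union (by simp [Finset.disjoint_left]; omega)]
  have : ∀ k, σ k * z k i * v k ν = σ k * v k ν * z k i := fun k => by ring
  simp_rw [this]
  ring

lemma myResidualNorm {n R : ℕ} (m rr : ℕ) (hrm : rr ≤ m)
    (σ : ℕ → ℝ) (z : ℕ → Fin n → ℝ) (v : ℕ → Fin R → ℝ)
    (hz : ∀ k < m, ∀ k' < m, ∑ i, z k i * z k' i = if k = k' then 1 else 0)
    (hv : ∀ k < m, ∀ k' < m, ∑ ν, v k ν * v k' ν = if k = k' then 1 else 0) :
    ∑ ν, ∑ i, (∑ k ∈ Finset.Ico rr m, σ k * v k ν * z k i)^2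
      = ∑ k ∈ Finset.Ico rr m, σ k ^ 2 := by
  have hmem : ∀ k ∈ Finset.Ico rr m, k < m := fun k hk => (Finset.mem_Ico.mp hk).2
  have h1 : ∀ ν, ∑ i, (∑ k ∈ Finset.Ico rr m, σ k * v k ν * z k i)^2
      = ∑ k ∈ Finset.Ico rr m, (σ k * v k ν) ^ 2 := fun ν =>
    ortho_sq m z hz _ hmem (fun k => σ k * v k ν)
  simp_rw [h1]
  rw [Finset.sum_comm]
  refine Finset.sum_congr rfl fun k hk => ?_
  have : ∀ ν, (σ k * v k ν)^2 = σ k ^2 * (v k ν * v k ν) := fun ν => by ring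
  simp_rw [this]
  rw [← Finset.mul_sum, hv k (hmem k hk) k (hmem k hk)]
  simp

lemma l2_tri {α : Type*} [Fintype α] (f g : α → ℝ) :
    Real.sqrt (∑ x, (f x + g x)^2) ≤ Real.sqrt (∑ x, f x^2) + Real.sqrt (∑ x, g x^2) := by
  have hf : 0 ≤ ∑ x, f x^2 := Finset.sum_nonneg fun _ _ => sq_nonneg _
  have hg : 0 ≤ ∑ x, g x^2 := Finset.sum_nonneg fun _ _ => sq_nonneg _
  have hc2 : (∑ x, f x * g x)^2 ≤ (∑ x, f x^2) * (∑ x, g x^2) :=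
    Finset.sum_mul_sq_le_sq_mul_sq Finset.univ _ _
  have hc : ∑ x, f x * g x ≤ Real.sqrt (∑ x, f x^2) * Real.sqrt (∑ x, g x^2) := by
    rw [← Real.sqrt_mul hf]
    calc ∑ x, f x * g x ≤ |∑ x, f x * g x| := le_abs_self _
      _ = Real.sqrt ((∑ x, f x * g x)^2) := (Real.sqrt_sq_eq_abs _).symm
      _ ≤ _ := Real.sqrt_le_sqrt hc2
  have hexp : ∑ x, (f x + g x)^2 = ∑ x, f x^2 + 2*(∑ x, f x * g x) + ∑ x, g x^2 := by
    have : ∀ x, (f x + g x)^2 = f x^2 + 2*(f x * g x) + g x^2 := fun x => by ring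
    simp_rw [this]
    rw [Finset.sum_add_distrib, Finset.sum_add_distrib, ← Finset.mul_sum]
  have h1 : ∑ x, (f x + g x)^2 ≤ (Real.sqrt (∑ x, f x^2) + Real.sqrt (∑ x, g x^2))^2 := by
    rw [add_sq, Real.sq_sqrt hf, Real.sq_sqrt hg, hexp]
    linarith
  calc Real.sqrt (∑ x, (f x + g x)^2)
      ≤ Real.sqrt ((Real.sqrt (∑ x, f x^2) + Real.sqrt (∑ x, g x^2))^2) := Real.sqrt_le_sqrt h1
    _ = _ := Real.sqrt_sq (by positivity)

lemma sum3_rot {n : ℕ} (F : Fin n → Fin n → Fin n → ℝ) :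
    ∑ i, ∑ j, ∑ k, F i j k = ∑ j, ∑ k, ∑ i, F i j k := by
  rw [Finset.sum_comm]
  exact Finset.sum_congr rfl fun j _ => Finset.sum_comm

theorem rhosvd_error_bound (n R : ℕ) (r : Fin 3 → ℕ)
    (ξ : Fin R → ℝ) (a : Fin 3 → Fin R → Fin n → ℝ)
    (ha : ∀ ℓ ν, ∑ i, (a ℓ ν i) ^ 2 = 1)
    (σ : Fin 3 → ℕ → ℝ) (z : Fin 3 → ℕ → Fin n → ℝ) (v : Fin 3 → ℕ → Fin R → ℝ)
    (hσnn : ∀ ℓ k, 0 ≤ σ ℓ k)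
    (hσdec : ∀ ℓ k k', k ≤ k' → σ ℓ k' ≤ σ ℓ k)
    (hz : ∀ ℓ, ∀ k < min n R, ∀ k' < min n R,
      ∑ i, z ℓ k i * z ℓ k' i = if k = k' then 1 else 0)
    (hv : ∀ ℓ, ∀ k < min n R, ∀ k' < min n R,
      ∑ ν, v ℓ k ν * v ℓ k' ν = if k = k' then 1 else 0)
    (hsvd : ∀ ℓ ν i, a ℓ ν i = ∑ k ∈ Finset.range (min n R), σ ℓ k * z ℓ k i * v ℓ k ν)
    (hr : ∀ ℓ, r ℓ ≤ min n R)
    (A A0 : Fin n → Fin n → Fin n → ℝ)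
    (hA : ∀ i j k, A i j k = ∑ ν, ξ ν * a 0 ν i * a 1 ν j * a 2 ν k)
    (P : Fin 3 → Fin n → Fin n → ℝ)
    (hP : ∀ ℓ i i', P ℓ i i' = ∑ t ∈ Finset.range (r ℓ), z ℓ t i * z ℓ t i')
    (hA0 : ∀ i j k, A0 i j k =
      ∑ i', ∑ j', ∑ k', P 0 i i' * P 1 j j' * P 2 k k' * A i' j' k') :
    Real.sqrt (∑ i, ∑ j, ∑ k, (A i j k - A0 i j k) ^ 2) ≤
      Real.sqrt (∑ ν, (ξ ν) ^ 2) *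
        ∑ ℓ : Fin 3, Real.sqrt (∑ k ∈ Finset.Ico (r ℓ) (min n R), (σ ℓ k) ^ 2) := by
  set W : Fin 3 → Fin R → Fin n → ℝ :=
    fun ℓ ν i => ∑ k ∈ Finset.Ico (r ℓ) (min n R), σ ℓ k * v ℓ k ν * z ℓ k i with hWdef
  have hw : ∀ ℓ ν i, a ℓ ν i - ∑ i', P ℓ i i' * a ℓ ν i' = W ℓ ν i := by
    intro ℓ ν i
    simp only [hWdef, hP]
    exact myResidual (min n R) (r ℓ) (hr ℓ) (σ ℓ) (z ℓ) (v ℓ) (hz ℓ) (a ℓ) (hsvd ℓ) ν i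
  have hWnorm : ∀ ℓ, ∑ ν, ∑ i, (W ℓ ν i)^2
      = ∑ k ∈ Finset.Ico (r ℓ) (min n R), σ ℓ k ^ 2 := by
    intro ℓ
    simp only [hWdef]
    exact myResidualNorm (min n R) (r ℓ) (hr ℓ) (σ ℓ) (z ℓ) (v ℓ) (hz ℓ) (hv ℓ)
  -- mode residual identities
  have hmode1 : ∀ i j k, A i j k - ∑ i', P 0 i i' * A i' j k
      = ∑ ν, ξ ν * W 0 ν i * a 1 ν j * a 2 ν k := by
    intro i j k
    have h1 : ∑ i', P 0 i i' * A i' j k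
        = ∑ ν, (ξ ν * a 1 ν j * a 2 ν k) * (∑ i', P 0 i i' * a 0 ν i') := by
      calc ∑ i', P 0 i i' * A i' j k
          = ∑ i', ∑ ν, P 0 i i' * (ξ ν * a 0 ν i' * a 1 ν j * a 2 ν k) := by
            simp_rw [hA, Finset.mul_sum]
        _ = ∑ ν, ∑ i', P 0 i i' * (ξ ν * a 0 ν i' * a 1 ν j * a 2 ν k) := Finset.sum_comm
        _ = ∑ ν, (ξ ν * a 1 ν j * a 2 ν k) * (∑ i', P 0 i i' * a 0 ν i') := by
            refine Finset.sum_congr rfl fun ν _ => ?_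
            rw [Finset.mul_sum]
            exact Finset.sum_congr rfl fun i' _ => by ring
    rw [hA i j k, h1, ← Finset.sum_sub_distrib]
    refine Finset.sum_congr rfl fun ν _ => ?_
    rw [← hw 0 ν i]
    ring
  have hmode2 : ∀ i j k, A i j k - ∑ j', P 1 j j' * A i j' k
      = ∑ ν, ξ ν * a 0 ν i * W 1 ν j * a 2 ν k := by
    intro i j k
    have h1 : ∑ j', P 1 j j' * A i j' k
        = ∑ ν, (ξ ν * a 0 ν i * a 2 ν k) * (∑ j', P 1 j j' * a 1 ν j') := by
      calc ∑ j', P 1 j j' * A i j' k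
          = ∑ j', ∑ ν, P 1 j j' * (ξ ν * a 0 ν i * a 1 ν j' * a 2 ν k) := by
            simp_rw [hA, Finset.mul_sum]
        _ = ∑ ν, ∑ j', P 1 j j' * (ξ ν * a 0 ν i * a 1 ν j' * a 2 ν k) := Finset.sum_comm
        _ = ∑ ν, (ξ ν * a 0 ν i * a 2 ν k) * (∑ j', P 1 j j' * a 1 ν j') := by
            refine Finset.sum_congr rfl fun ν _ => ?_
            rw [Finset.mul_sum]
            exact Finset.sum_congr rfl fun j' _ => by ring
    rw [hA i j k, h1, ← Finset.sum_sub_distrib]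
    refine Finset.sum_congr rfl fun ν _ => ?_
    rw [← hw 1 ν j]
    ring
  have hmode3 : ∀ i j k, A i j k - ∑ k', P 2 k k' * A i j k'
      = ∑ ν, ξ ν * a 0 ν i * a 1 ν j * W 2 ν k := by
    intro i j k
    have h1 : ∑ k', P 2 k k' * A i j k'
        = ∑ ν, (ξ ν * a 0 ν i * a 1 ν j) * (∑ k', P 2 k k' * a 2 ν k') := by
      calc ∑ k', P 2 k k' * A i j k'
          = ∑ k', ∑ ν, P 2 k k' * (ξ ν * a 0 ν i * a 1 ν j * a 2 ν k') := by
            simp_rw [hA, Finset.mul_sum]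
        _ = ∑ ν, ∑ k', P 2 k k' * (ξ ν * a 0 ν i * a 1 ν j * a 2 ν k') := Finset.sum_comm
        _ = ∑ ν, (ξ ν * a 0 ν i * a 1 ν j) * (∑ k', P 2 k k' * a 2 ν k') := by
            refine Finset.sum_congr rfl fun ν _ => ?_
            rw [Finset.mul_sum]
            exact Finset.sum_congr rfl fun k' _ => by ring
    rw [hA i j k, h1, ← Finset.sum_sub_distrib]
    refine Finset.sum_congr rfl fun ν _ => ?_
    rw [← hw 2 ν k]
    ring
  -- the three pieces
  set T1 : Fin n → Fin n → Fin n → ℝ :=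
    fun i j k => ∑ ν, ξ ν * W 0 ν i * a 1 ν j * a 2 ν k with hT1def
  set S2 : Fin n → Fin n → Fin n → ℝ :=
    fun i j k => ∑ ν, ξ ν * a 0 ν i * W 1 ν j * a 2 ν k with hS2def
  set S3 : Fin n → Fin n → Fin n → ℝ :=
    fun i j k => ∑ ν, ξ ν * a 0 ν i * a 1 ν j * W 2 ν k with hS3def
  have hsplit : ∀ i j k, A i j k - A0 i j k = T1 i j k
      + ((∑ i', P 0 i i' * S2 i' j k)
        + (∑ i', ∑ j', P 0 i i' * P 1 j j' * S3 i' j' k)) := by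
    intro i j k
    have e1 := hmode1 i j k
    have e2 : (∑ i', P 0 i i' * S2 i' j k)
        = (∑ i', P 0 i i' * A i' j k)
          - ∑ i', ∑ j', P 0 i i' * (P 1 j j' * A i' j' k) := by
      rw [← Finset.sum_sub_distrib]
      refine Finset.sum_congr rfl fun i' _ => ?_
      rw [← Finset.mul_sum, ← mul_sub, hmode2 i' j k]
    have e3 : (∑ i', ∑ j', P 0 i i' * P 1 j j' * S3 i' j' k)
        = (∑ i', ∑ j', P 0 i i' * (P 1 j j' * A i' j' k)) - A0 i j k := by
      rw [hA0, ← Finset.sum_sub_distrib]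
      refine Finset.sum_congr rfl fun i' _ => ?_
      rw [← Finset.sum_sub_distrib]
      refine Finset.sum_congr rfl fun j' _ => ?_
      have h4 : ∑ k', P 0 i i' * P 1 j j' * P 2 k k' * A i' j' k'
          = P 0 i i' * P 1 j j' * ∑ k', P 2 k k' * A i' j' k' := by
        rw [Finset.mul_sum]
        exact Finset.sum_congr rfl fun k' _ => by ring
      rw [h4]
      simp only [hS3def]
      rw [← hmode3 i' j' k]
      ring
    linarith [e1, e2, e3]
  -- unit-product helper
  have hqq : ∀ (ℓ₁ ℓ₂ : Fin 3) (ν : Fin R),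
      ∑ y : Fin n × Fin n, (ξ ν * a ℓ₁ ν y.1 * a ℓ₂ ν y.2)^2 = ξ ν ^ 2 := by
    intro ℓ₁ ℓ₂ ν
    rw [Fintype.sum_prod_type]
    calc ∑ j, ∑ k, (ξ ν * a ℓ₁ ν j * a ℓ₂ ν k)^2
        = ∑ j, (ξ ν^2 * a ℓ₁ ν j^2) * ∑ k, a ℓ₂ ν k^2 := by
          refine Finset.sum_congr rfl fun j _ => ?_
          rw [Finset.mul_sum]
          exact Finset.sum_congr rfl fun k _ => by ring
      _ = ξ ν ^ 2 := by
          rw [ha ℓ₂ ν]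
          simp_rw [mul_one]
          rw [← Finset.mul_sum, ha ℓ₁ ν, mul_one]
  have hPz : ∀ (ℓ : Fin 3) (x : Fin n → ℝ),
      ∑ i, (∑ i', P ℓ i i' * x i')^2 ≤ ∑ i, x i ^ 2 := by
    intro ℓ x
    simp_rw [hP]
    exact contraction (min n R) (r ℓ) (hr ℓ) (z ℓ) (hz ℓ) x
  have b1 : ∑ i, ∑ j, ∑ k, (T1 i j k)^2
      ≤ (∑ ν, ξ ν^2) * ∑ k ∈ Finset.Ico (r 0) (min n R), σ 0 k ^ 2 := by
    calc ∑ i, ∑ j, ∑ k, (T1 i j k)^2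
        = ∑ x : Fin n, ∑ y : Fin n × Fin n,
            (∑ ν, W 0 ν x * (ξ ν * a 1 ν y.1 * a 2 ν y.2))^2 := by
          refine Finset.sum_congr rfl fun i _ => ?_
          rw [Fintype.sum_prod_type]
          refine Finset.sum_congr rfl fun j _ => Finset.sum_congr rfl fun k _ => ?_
          simp only [hT1def]
          congr 1
          exact Finset.sum_congr rfl fun ν _ => by ring
      _ ≤ (∑ ν, ∑ x, W 0 ν x^2)
            * (∑ ν, ∑ y : Fin n × Fin n, (ξ ν * a 1 ν y.1 * a 2 ν y.2)^2) := pair_cs _ _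
      _ = (∑ ν, ξ ν^2) * ∑ k ∈ Finset.Ico (r 0) (min n R), σ 0 k ^ 2 := by
          rw [hWnorm 0, Finset.sum_congr rfl fun ν _ => hqq 1 2 ν]
          ring
  have b2 : ∑ i, ∑ j, ∑ k, (∑ i', P 0 i i' * S2 i' j k)^2
      ≤ (∑ ν, ξ ν^2) * ∑ k ∈ Finset.Ico (r 1) (min n R), σ 1 k ^ 2 := by
    calc ∑ i, ∑ j, ∑ k, (∑ i', P 0 i i' * S2 i' j k)^2
        = ∑ j, ∑ k, ∑ i, (∑ i', P 0 i i' * S2 i' j k)^2 :=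
          sum3_rot (fun i j k => (∑ i', P 0 i i' * S2 i' j k)^2)
      _ ≤ ∑ j, ∑ k, ∑ i, (S2 i j k)^2 :=
          Finset.sum_le_sum fun j _ => Finset.sum_le_sum fun k _ => hPz 0 (fun i => S2 i j k)
      _ = ∑ i, ∑ j, ∑ k, (S2 i j k)^2 := (sum3_rot (fun i j k => (S2 i j k)^2)).symm
      _ = ∑ x : Fin n, ∑ y : Fin n × Fin n,
            (∑ ν, W 1 ν x * (ξ ν * a 0 ν y.1 * a 2 ν y.2))^2 := by
          rw [Finset.sum_comm]
          refine Finset.sum_congr rfl fun j _ => ?_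
          rw [Fintype.sum_prod_type]
          refine Finset.sum_congr rfl fun i _ => Finset.sum_congr rfl fun k _ => ?_
          simp only [hS2def]
          congr 1
          exact Finset.sum_congr rfl fun ν _ => by ring
      _ ≤ (∑ ν, ∑ x, W 1 ν x^2)
            * (∑ ν, ∑ y : Fin n × Fin n, (ξ ν * a 0 ν y.1 * a 2 ν y.2)^2) := pair_cs _ _
      _ = (∑ ν, ξ ν^2) * ∑ k ∈ Finset.Ico (r 1) (min n R), σ 1 k ^ 2 := by
          rw [hWnorm 1, Finset.sum_congr rfl fun ν _ => hqq 0 2 ν]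
          ring
  have b3 : ∑ i, ∑ j, ∑ k, (∑ i', ∑ j', P 0 i i' * P 1 j j' * S3 i' j' k)^2
      ≤ (∑ ν, ξ ν^2) * ∑ k ∈ Finset.Ico (r 2) (min n R), σ 2 k ^ 2 := by
    have hassoc : ∀ i j k, (∑ i', ∑ j', P 0 i i' * P 1 j j' * S3 i' j' k)
        = ∑ i', P 0 i i' * ∑ j', P 1 j j' * S3 i' j' k := by
      intro i j k
      refine Finset.sum_congr rfl fun i' _ => ?_
      rw [Finset.mul_sum]
      exact Finset.sum_congr rfl fun j' _ => by ring
    calc ∑ i, ∑ j, ∑ k, (∑ i', ∑ j', P 0 i i' * P 1 j j' * S3 i' j' k)^2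
        = ∑ j, ∑ k, ∑ i, (∑ i', P 0 i i' * ∑ j', P 1 j j' * S3 i' j' k)^2 := by
          simp_rw [hassoc]
          exact sum3_rot _
      _ ≤ ∑ j, ∑ k, ∑ i, (∑ j', P 1 j j' * S3 i j' k)^2 :=
          Finset.sum_le_sum fun j _ => Finset.sum_le_sum fun k _ =>
            hPz 0 (fun i => ∑ j', P 1 j j' * S3 i j' k)
      _ = ∑ k, ∑ i, ∑ j, (∑ j', P 1 j j' * S3 i j' k)^2 :=
          sum3_rot (fun j k i => (∑ j', P 1 j j' * S3 i j' k)^2)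
      _ ≤ ∑ k, ∑ i, ∑ j', (S3 i j' k)^2 :=
          Finset.sum_le_sum fun k _ => Finset.sum_le_sum fun i _ =>
            hPz 1 (fun j => S3 i j k)
      _ = ∑ x : Fin n, ∑ y : Fin n × Fin n,
            (∑ ν, W 2 ν x * (ξ ν * a 0 ν y.1 * a 1 ν y.2))^2 := by
          refine Finset.sum_congr rfl fun k _ => ?_
          rw [Fintype.sum_prod_type]
          refine Finset.sum_congr rfl fun i _ => Finset.sum_congr rfl fun j _ => ?_
          simp only [hS3def]
          congr 1
          exact Finset.sum_congr rfl fun ν _ => by ring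
      _ ≤ (∑ ν, ∑ x, W 2 ν x^2)
            * (∑ ν, ∑ y : Fin n × Fin n, (ξ ν * a 0 ν y.1 * a 1 ν y.2)^2) := pair_cs _ _
      _ = (∑ ν, ξ ν^2) * ∑ k ∈ Finset.Ico (r 2) (min n R), σ 2 k ^ 2 := by
          rw [hWnorm 2, Finset.sum_congr rfl fun ν _ => hqq 0 1 ν]
          ring
  -- assembly
  have hXnn : (0:ℝ) ≤ ∑ ν, ξ ν ^ 2 := Finset.sum_nonneg fun _ _ => sq_nonneg _
  have prodconv : ∀ G : Fin n → Fin n → Fin n → ℝ, ∑ i, ∑ j, ∑ k, G i j k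
      = ∑ p : Fin n × Fin n × Fin n, G p.1 p.2.1 p.2.2 := by
    intro G
    rw [Fintype.sum_prod_type]
    exact Finset.sum_congr rfl fun i _ => by rw [Fintype.sum_prod_type]
  have tri : Real.sqrt (∑ i, ∑ j, ∑ k, (A i j k - A0 i j k)^2)
      ≤ Real.sqrt (∑ i, ∑ j, ∑ k, (T1 i j k)^2)
        + (Real.sqrt (∑ i, ∑ j, ∑ k, (∑ i', P 0 i i' * S2 i' j k)^2)
          + Real.sqrt (∑ i, ∑ j, ∑ k, (∑ i', ∑ j', P 0 i i' * P 1 j j' * S3 i' j' k)^2)) := by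
    rw [prodconv (fun i j k => (A i j k - A0 i j k)^2),
        prodconv (fun i j k => (T1 i j k)^2),
        prodconv (fun i j k => (∑ i', P 0 i i' * S2 i' j k)^2),
        prodconv (fun i j k => (∑ i', ∑ j', P 0 i i' * P 1 j j' * S3 i' j' k)^2)]
    have hrw : ∀ p : Fin n × Fin n × Fin n, (A p.1 p.2.1 p.2.2 - A0 p.1 p.2.1 p.2.2)^2
        = (T1 p.1 p.2.1 p.2.2
            + ((∑ i', P 0 p.1 i' * S2 i' p.2.1 p.2.2)
              + (∑ i', ∑ j', P 0 p.1 i' * P 1 p.2.1 j' * S3 i' j' p.2.2)))^2 := by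
      intro p
      rw [hsplit p.1 p.2.1 p.2.2]
    rw [Finset.sum_congr rfl fun p _ => hrw p]
    refine le_trans (l2_tri _ _) ?_
    exact add_le_add le_rfl (l2_tri _ _)
  have sb : ∀ (X Y : ℝ), 0 ≤ Y → X ≤ (∑ ν, ξ ν ^2) * Y →
      Real.sqrt X ≤ Real.sqrt (∑ ν, ξ ν ^2) * Real.sqrt Y := by
    intro X Y hY hXY
    calc Real.sqrt X ≤ Real.sqrt ((∑ ν, ξ ν ^2) * Y) := Real.sqrt_le_sqrt hXY
      _ = _ := Real.sqrt_mul hXnn Y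
  have hσ1nn : ∀ ℓ : Fin 3, (0:ℝ) ≤ ∑ k ∈ Finset.Ico (r ℓ) (min n R), σ ℓ k ^ 2 :=
    fun ℓ => Finset.sum_nonneg fun _ _ => sq_nonneg _
  calc Real.sqrt (∑ i, ∑ j, ∑ k, (A i j k - A0 i j k)^2)
      ≤ Real.sqrt (∑ i, ∑ j, ∑ k, (T1 i j k)^2)
        + (Real.sqrt (∑ i, ∑ j, ∑ k, (∑ i', P 0 i i' * S2 i' j k)^2)
          + Real.sqrt (∑ i, ∑ j, ∑ k, (∑ i', ∑ j', P 0 i i' * P 1 j j' * S3 i' j' k)^2)) := tri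
    _ ≤ Real.sqrt (∑ ν, ξ ν ^2) * Real.sqrt (∑ k ∈ Finset.Ico (r 0) (min n R), σ 0 k ^ 2)
        + (Real.sqrt (∑ ν, ξ ν ^2) * Real.sqrt (∑ k ∈ Finset.Ico (r 1) (min n R), σ 1 k ^ 2)
          + Real.sqrt (∑ ν, ξ ν ^2) * Real.sqrt (∑ k ∈ Finset.Ico (r 2) (min n R), σ 2 k ^ 2)) :=
        add_le_add (sb _ _ (hσ1nn 0) b1) (add_le_add (sb _ _ (hσ1nn 1) b2) (sb _ _ (hσ1nn 2) b3))
    _ = Real.sqrt (∑ ν, ξ ν ^2)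
        * ∑ ℓ : Fin 3, Real.sqrt (∑ k ∈ Finset.Ico (r ℓ) (min n R), σ ℓ k ^ 2) := by
        rw [Fin.sum_univ_three]
        ring
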